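/- arXiv:1811.05228 — 3 statements merged into one kernel-verified Lean document; each statement's English description precedes it below -/
import Mathlib

section
/- Let (X,<) be a linear order, E a <-convex equivalence relation on X, and E' an equivalence relation on X that is <-convex and is either coarser than E (E refines E') or finer than E (E' refines E). Then E' is <_E-convex, i.e., every E'-class is convex with respect to the order <_E. -/
/-- `leOf r a b`: the reflexive closure of the strict order `r`. -/
def leOf {X : Type*} (r : X → X → Prop) (a b : X) : Prop := r a b ∨ a = b

/-- `R` is a monotone relation between `(A, ltA)` and `(B, ltB)`. -/
def MonotoneRel {A B : Type*} (ltA : A → A → Prop) (ltB : B → B → Prop)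
    (R : A → B → Prop) : Prop :=
  ∀ a a' b b', leOf ltA a a' → R a' b' → leOf ltB b' b → R a b

/-- `I` is an initial part (downward closed set) w.r.t. `lt`. -/
def IsInitialPart {X : Type*} (lt : X → X → Prop) (I : Set X) : Prop :=
  ∀ a ∈ I, ∀ b, lt b a → b ∈ I

/-- `F` is a final part (upward closed set) w.r.t. `lt`. -/
def IsFinalPart {X : Type*} (lt : X → X → Prop) (F : Set X) : Prop :=
  ∀ a ∈ F, ∀ b, lt a b → b ∈ F

/-- `D` is a convex set w.r.t. `lt`. -/
def ConvexSet {X : Type*} (lt : X → X → Prop) (D : Set X) : Prop :=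
  ∀ a ∈ D, ∀ b ∈ D, ∀ c, lt a c → lt c b → c ∈ D

/-- `E` is a `lt`-convex equivalence relation. -/
def ConvexEquiv {X : Type*} (lt : X → X → Prop) (E : X → X → Prop) : Prop :=
  Equivalence E ∧ ∀ a b c, E a b → lt a c → lt c b → E a c

/-- The order `<_E`: reverse inside each `E`-class, keep the order of classes. -/
def ltE {X : Type*} (lt E : X → X → Prop) (x y : X) : Prop :=
  (E x y ∧ lt y x) ∨ (¬ E x y ∧ lt x y)

/-- `D` is a finite union of `lt`-convex sets. -/
def FinUnionConvex {X : Type*} (lt : X → X → Prop) (D : Set X) : Prop :=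
  ∃ (n : ℕ) (C : Fin n → Set X), (∀ i, ConvexSet lt (C i)) ∧ D = ⋃ i, C i

theorem stmt_7 {X : Type*} (lt E E' : X → X → Prop)
    [IsStrictTotalOrder X lt]
    (hE : ConvexEquiv lt E) (hE' : ConvexEquiv lt E')
    (hcf : (∀ x y, E x y → E' x y) ∨ (∀ x y, E' x y → E x y)) :
    ∀ a b c, E' a b → ltE lt E a c → ltE lt E c b → E' a c := by
  obtain ⟨eqE, convE⟩ := hE
  obtain ⟨eqE', convE'⟩ := hE'
  intro a b c hab hac hcb
  rcases hcf with hcoarse | hfine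
  · -- E ⊆ E'
    rcases hac with ⟨h1, _⟩ | ⟨h1, h2⟩
    · exact hcoarse _ _ h1
    · rcases hcb with ⟨h3, _⟩ | ⟨h3, h4⟩
      · exact eqE'.trans hab (eqE'.symm (hcoarse _ _ h3))
      · exact convE' a b c hab h2 h4
  · -- E' ⊆ E
    have hEab : E a b := hfine _ _ hab
    rcases hac with ⟨h1, h2⟩ | ⟨h1, h2⟩
    · rcases hcb with ⟨h3, h4⟩ | ⟨h3, h4⟩
      · exact eqE'.trans hab (convE' b a c (eqE'.symm hab) h4 h2)
      · exact absurd (eqE.trans (eqE.symm h1) hEab) h3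
    · rcases hcb with ⟨h3, h4⟩ | ⟨h3, h4⟩
      · exact absurd (eqE.trans hEab (eqE.symm h3)) h1
      · exact convE' a b c hab h2 h4
end

section
/- Let (X,<) be a linear order, E a <-convex equivalence relation, and D ⊆ X a <-convex set. Then D is a union of at most three <_E-convex sets. Consequently, every <-convex set is a finite union of <_E-convex sets, and conversely every <_E-convex set is a finite union of <-convex sets. -/
/-- Key lemma, with trichotomy as an explicit hypothesis so it can be reused for `ltE`. -/
lemma key_decomp {X : Type*} (lt E : X → X → Prop)
    (htri : ∀ x y : X, lt x y ∨ x = y ∨ lt y x)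
    (hE : ConvexEquiv lt E) (D : Set X) (hD : ConvexSet lt D) :
    ∃ C₁ C₂ C₃ : Set X, ConvexSet (ltE lt E) C₁ ∧ ConvexSet (ltE lt E) C₂ ∧
      ConvexSet (ltE lt E) C₃ ∧ D = C₁ ∪ C₂ ∪ C₃ := by
  classical
  obtain ⟨hEq, hconv⟩ := hE
  refine ⟨{x | x ∈ D ∧ ∃ y, E x y ∧ y ∉ D ∧ lt y x},
          {x | x ∈ D ∧ ∀ y, E x y → y ∈ D},
          {x | x ∈ D ∧ ∃ y, E x y ∧ y ∉ D ∧ lt x y}, ?_, ?_, ?_, ?_⟩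
  · -- C₁ convex
    rintro a ⟨haD, ya, hEya, hyaD, hya⟩ b ⟨hbD, yb, hEyb, hybD, hyb⟩ c hac hcb
    -- first: E a b
    have hEab : E a b := by
      rcases htri a b with h | rfl | h
      · -- lt a b; show lt yb a
        have hyba : lt yb a := by
          rcases htri a yb with h' | h' | h'
          · exact absurd (hD a haD b hbD yb h' hyb) hybD
          · exact absurd (h' ▸ haD) hybD
          · exact h'
        have : E yb a := hconv yb b a (hEq.symm hEyb) hyba h
        exact hEq.trans (hEq.symm this) (hEq.symm hEyb)
      · exact hEq.refl a
      · -- lt b a; show lt ya b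
        have hybb : lt ya b := by
          rcases htri b ya with h' | h' | h'
          · exact absurd (hD b hbD a haD ya h' hya) hyaD
          · exact absurd (h' ▸ hbD) hyaD
          · exact h'
        have : E ya b := hconv ya a b (hEq.symm hEya) hybb h
        exact hEq.trans hEya this
    have hEac : E a c := by
      by_contra hn
      have hlt_ac : lt a c := by
        rcases hac with ⟨h1, _⟩ | ⟨_, h2⟩
        · exact absurd h1 hn
        · exact h2
      have hncb : ¬ E c b := fun h => hn (hEq.trans hEab (hEq.symm h))
      have hlt_cb : lt c b := by
        rcases hcb with ⟨h1, _⟩ | ⟨_, h2⟩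
        · exact absurd h1 hncb
        · exact h2
      exact hn (hconv a b c hEab hlt_ac hlt_cb)
    have hlt_ca : lt c a := by
      rcases hac with ⟨_, h⟩ | ⟨h, _⟩
      · exact h
      · exact absurd hEac h
    have hEcb : E c b := hEq.trans (hEq.symm hEac) hEab
    have hlt_bc : lt b c := by
      rcases hcb with ⟨_, h⟩ | ⟨h, _⟩
      · exact h
      · exact absurd hEcb h
    have hcD : c ∈ D := hD b hbD a haD c hlt_bc hlt_ca
    refine ⟨hcD, ya, hEq.trans (hEq.symm hEac) hEya, hyaD, ?_⟩
    rcases htri ya c with h' | h' | h'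
    · exact h'
    · exact absurd (h' ▸ hcD) hyaD
    · exact absurd (hD c hcD a haD ya h' hya) hyaD
  · -- C₂ convex
    rintro a ⟨haD, ha⟩ b ⟨hbD, hb⟩ c hac hcb
    by_cases hEac : E a c
    · exact ⟨ha c hEac, fun y hy => ha y (hEq.trans hEac hy)⟩
    · have hlt_ac : lt a c := by
        rcases hac with ⟨h1, _⟩ | ⟨_, h2⟩
        · exact absurd h1 hEac
        · exact h2
      by_cases hEcb : E c b
      · exact ⟨hb c (hEq.symm hEcb), fun y hy => hb y (hEq.trans (hEq.symm hEcb) hy)⟩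
      · have hlt_cb : lt c b := by
          rcases hcb with ⟨h1, _⟩ | ⟨_, h2⟩
          · exact absurd h1 hEcb
          · exact h2
        refine ⟨hD a haD b hbD c hlt_ac hlt_cb, fun d hEcd => ?_⟩
        have hlt_ad : lt a d := by
          rcases htri d a with h' | h' | h'
          · exact absurd (hEq.trans (hEq.symm (hconv d c a (hEq.symm hEcd) h' hlt_ac)) (hEq.symm hEcd)) hEac
          · exact absurd (hEq.symm (h' ▸ hEcd) : E a c) hEac
          · exact h'
        have hlt_db : lt d b := by
          rcases htri b d with h' | h' | h'
          · exact absurd (hconv c d b hEcd hlt_cb h') hEcb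
          · exact absurd (h' ▸ hEcd) hEcb
          · exact h'
        exact hD a haD b hbD d hlt_ad hlt_db
  · -- C₃ convex
    rintro a ⟨haD, ya, hEya, hyaD, hya⟩ b ⟨hbD, yb, hEyb, hybD, hyb⟩ c hac hcb
    have hEab : E a b := by
      rcases htri a b with h | rfl | h
      · have hbya : lt b ya := by
          rcases htri ya b with h' | h' | h'
          · exact absurd (hD a haD b hbD ya hya h') hyaD
          · exact absurd (h' ▸ hbD) hyaD
          · exact h'
        exact hconv a ya b hEya h hbya
      · exact hEq.refl a
      · have hayb : lt a yb := by
          rcases htri yb a with h' | h' | h'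
          · exact absurd (hD b hbD a haD yb hyb h') hybD
          · exact absurd (h' ▸ haD) hybD
          · exact h'
        exact hEq.symm (hconv b yb a hEyb h hayb)
    have hEac : E a c := by
      by_contra hn
      have hlt_ac : lt a c := by
        rcases hac with ⟨h1, _⟩ | ⟨_, h2⟩
        · exact absurd h1 hn
        · exact h2
      have hncb : ¬ E c b := fun h => hn (hEq.trans hEab (hEq.symm h))
      have hlt_cb : lt c b := by
        rcases hcb with ⟨h1, _⟩ | ⟨_, h2⟩
        · exact absurd h1 hncb
        · exact h2
      exact hn (hconv a b c hEab hlt_ac hlt_cb)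
    have hlt_ca : lt c a := by
      rcases hac with ⟨_, h⟩ | ⟨h, _⟩
      · exact h
      · exact absurd hEac h
    have hEcb : E c b := hEq.trans (hEq.symm hEac) hEab
    have hlt_bc : lt b c := by
      rcases hcb with ⟨_, h⟩ | ⟨h, _⟩
      · exact h
      · exact absurd hEcb h
    have hcD : c ∈ D := hD b hbD a haD c hlt_bc hlt_ca
    refine ⟨hcD, yb, hEq.trans hEcb hEyb, hybD, ?_⟩
    rcases htri c yb with h' | h' | h'
    · exact h'
    · exact absurd (h' ▸ hcD) hybD
    · exact absurd (hD b hbD c hcD yb hyb h') hybD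
  · -- union
    ext x
    constructor
    · intro hx
      by_cases h : ∀ y, E x y → y ∈ D
      · exact Or.inl (Or.inr ⟨hx, h⟩)
      · push_neg at h
        obtain ⟨y, hExy, hyD⟩ := h
        rcases htri y x with h' | h' | h'
        · exact Or.inl (Or.inl ⟨hx, y, hExy, hyD, h'⟩)
        · exact absurd (h' ▸ hx) hyD
        · exact Or.inr ⟨hx, y, hExy, hyD, h'⟩
    · rintro ((⟨h, -⟩ | ⟨h, -⟩) | ⟨h, -⟩) <;> exact h

lemma convexSet_congr {X : Type*} {r s : X → X → Prop} (h : ∀ x y, r x y ↔ s x y)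
    {C : Set X} (hC : ConvexSet r C) : ConvexSet s C :=
  fun a ha b hb c h1 h2 => hC a ha b hb c ((h a c).mpr h1) ((h c b).mpr h2)

theorem stmt_8 {X : Type*} (lt E : X → X → Prop)
    [IsStrictTotalOrder X lt] (hE : ConvexEquiv lt E) :
    (∀ D : Set X, ConvexSet lt D →
      ∃ C₁ C₂ C₃ : Set X, ConvexSet (ltE lt E) C₁ ∧ ConvexSet (ltE lt E) C₂ ∧
        ConvexSet (ltE lt E) C₃ ∧ D = C₁ ∪ C₂ ∪ C₃) ∧
    (∀ D : Set X, ConvexSet lt D → FinUnionConvex (ltE lt E) D) ∧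
    (∀ D : Set X, ConvexSet (ltE lt E) D → FinUnionConvex lt D) := by
  have htri : ∀ x y : X, lt x y ∨ x = y ∨ lt y x := fun x y => trichotomous_of lt x y
  obtain ⟨hEq, hconv⟩ := hE
  -- trichotomy for ltE
  have htri' : ∀ x y : X, ltE lt E x y ∨ x = y ∨ ltE lt E y x := by
    intro x y
    by_cases hxy : E x y
    · rcases htri x y with h | rfl | h
      · exact Or.inr (Or.inr (Or.inl ⟨hEq.symm hxy, h⟩))
      · exact Or.inr (Or.inl rfl)
      · exact Or.inl (Or.inl ⟨hxy, h⟩)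
    · rcases htri x y with h | rfl | h
      · exact Or.inl (Or.inr ⟨hxy, h⟩)
      · exact Or.inr (Or.inl rfl)
      · exact Or.inr (Or.inr (Or.inr ⟨fun h' => hxy (hEq.symm h'), h⟩))
  -- E is ltE-convex
  have hE' : ConvexEquiv (ltE lt E) E := by
    refine ⟨hEq, fun a b c hab hac hcb => ?_⟩
    by_cases h : E a c
    · exact h
    · exfalso
      have h1 : lt a c := by
        rcases hac with ⟨h1, _⟩ | ⟨_, h2⟩
        · exact absurd h1 h
        · exact h2
      have hncb : ¬ E c b := fun h' => h (hEq.trans hab (hEq.symm h'))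
      have h2 : lt c b := by
        rcases hcb with ⟨h1, _⟩ | ⟨_, h2⟩
        · exact absurd h1 hncb
        · exact h2
      exact h (hconv a b c hab h1 h2)
  -- double ltE is lt
  have hdouble : ∀ x y : X, ltE (ltE lt E) E x y ↔ lt x y := by
    intro x y
    constructor
    · rintro (⟨hxy, (⟨_, h⟩ | ⟨hn, _⟩)⟩ | ⟨hn, (⟨h', _⟩ | ⟨_, h⟩)⟩)
      · exact h
      · exact absurd (hEq.symm hxy) hn
      · exact absurd h' hn
      · exact h
    · intro h
      by_cases hxy : E x y
      · exact Or.inl ⟨hxy, Or.inl ⟨hEq.symm hxy, h⟩⟩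
      · exact Or.inr ⟨hxy, Or.inr ⟨hxy, h⟩⟩
  have part1 := key_decomp lt E htri ⟨hEq, hconv⟩
  have finOf : ∀ (r : X → X → Prop) (D C₁ C₂ C₃ : Set X), ConvexSet r C₁ → ConvexSet r C₂ →
      ConvexSet r C₃ → D = C₁ ∪ C₂ ∪ C₃ → FinUnionConvex r D := by
    intro r D C₁ C₂ C₃ h1 h2 h3 hD
    refine ⟨3, ![C₁, C₂, C₃], ?_, ?_⟩
    · intro i
      fin_cases i
      · exact h1
      · exact h2
      · exact h3
    · rw [hD]
      ext x
      simp only [Set.mem_iUnion, Fin.exists_fin_succ_pi]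
      constructor
      · rintro ((h | h) | h)
        · exact ⟨0, h⟩
        · exact ⟨1, h⟩
        · exact ⟨2, h⟩
      · rintro ⟨i, hi⟩
        fin_cases i
        · exact Or.inl (Or.inl hi)
        · exact Or.inl (Or.inr hi)
        · exact Or.inr hi
  refine ⟨part1, ?_, ?_⟩
  · intro D hD
    obtain ⟨C₁, C₂, C₃, h1, h2, h3, hDeq⟩ := part1 D hD
    exact finOf _ D C₁ C₂ C₃ h1 h2 h3 hDeq
  · intro D hD
    obtain ⟨C₁, C₂, C₃, h1, h2, h3, hDeq⟩ := key_decomp (ltE lt E) E htri' hE' D hD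
    exact finOf _ D C₁ C₂ C₃ (convexSet_congr hdouble h1) (convexSet_congr hdouble h2)
      (convexSet_congr hdouble h3) hDeq
end

section
/- Let X be a set, ≺ and ◁ linear orders on X, E a ≺-convex equivalence relation on X, and R ⊆ X × X a (≺_E, ◁)-monotone relation. Then there exist a ◁-convex equivalence relation F on X, (≺,◁)-monotone relations R₁ and R₂, and a (≺, ◁_F)-monotone relation R₃ such that R = R₁ ∪ (R₂ \ R₃). -/
/-- Auxiliary: `R` holds for every member of the `E`-class of `a`. -/
def aux1 {X : Type*} (E R : X → X → Prop) (a b : X) : Prop := ∀ x, E a x → R x b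

/-- Auxiliary: `R` holds for some member of the `E`-class of `a`. -/
def aux2 {X : Type*} (E R : X → X → Prop) (a b : X) : Prop := ∃ x, E a x ∧ R x b

/-- Auxiliary relation `R₃`. -/
def aux3 {X : Type*} (E R : X → X → Prop) (a b : X) : Prop :=
  aux1 E R a b ∨ (aux2 E R a b ∧ ¬ R a b)

/-- Auxiliary equivalence relation `F`: equal, or lying in a common gap. -/
def auxF {X : Type*} (E R : X → X → Prop) (b b' : X) : Prop :=
  b = b' ∨ ∃ a, (aux2 E R a b ∧ ¬ aux1 E R a b) ∧ (aux2 E R a b' ∧ ¬ aux1 E R a b')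

theorem stmt_13 {X : Type*} (prec tri : X → X → Prop)
    [IsStrictTotalOrder X prec] [IsStrictTotalOrder X tri]
    (E : X → X → Prop) (hE : ConvexEquiv prec E)
    (R : X → X → Prop) (hR : MonotoneRel (ltE prec E) tri R) :
    ∃ (F R₁ R₂ R₃ : X → X → Prop),
      ConvexEquiv tri F ∧
      MonotoneRel prec tri R₁ ∧
      MonotoneRel prec tri R₂ ∧
      MonotoneRel prec (ltE tri F) R₃ ∧
      ∀ x y, R x y ↔ (R₁ x y ∨ (R₂ x y ∧ ¬ R₃ x y)) := by
  classical
  obtain ⟨hEq, hConv⟩ := hE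
  have Rup : ∀ x b' b, R x b' → leOf tri b' b → R x b :=
    fun x b' b h ht => hR x x b b' (Or.inr rfl) h ht
  have Rdown : ∀ x y b, ltE prec E x y → R y b → R x b :=
    fun x y b h hy => hR x y b b (Or.inl h) hy (Or.inr rfl)
  -- class separation
  have sep : ∀ a a' y x, prec a a' → ¬ E a a' → E a y → E a' x → prec y x := by
    intro a a' y x haa hne hay hax
    rcases trichotomous_of prec y x with h | h | h
    · exact h
    · subst h
      exact absurd (hEq.trans hay (hEq.symm hax)) hne
    · exfalso
      rcases trichotomous_of prec x a with h2 | h2 | h2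
      · have hxa : E x a := hConv x a' a (hEq.symm hax) h2 haa
        exact hne (hEq.trans (hEq.symm hxa) (hEq.symm hax))
      · subst h2
        exact hne (hEq.symm hax)
      · have hax2 : E a x := hConv a y x hay h2 h
        exact hne (hEq.trans hax2 (hEq.symm hax))
  -- basic containments and invariance
  have h1sub : ∀ a b, aux1 E R a b → R a b := fun a b h => h a (hEq.refl a)
  have hsub2 : ∀ a b, R a b → aux2 E R a b := fun a b h => ⟨a, hEq.refl a, h⟩
  have inv1 : ∀ a a' b, E a a' → aux1 E R a' b → aux1 E R a b :=
    fun a a' b he h x hx => h x (hEq.trans (hEq.symm he) hx)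
  have inv2 : ∀ a a' b, E a a' → aux2 E R a' b → aux2 E R a b := by
    rintro a a' b he ⟨x, hx, hr⟩
    exact ⟨x, hEq.trans he hx, hr⟩
  have key1 : ∀ a a' b, prec a a' → ¬ E a a' → aux2 E R a' b → aux1 E R a b := by
    rintro a a' b haa hne ⟨x, hx, hrx⟩ y hy
    have hyx : ¬ E y x := fun h => hne (hEq.trans hy (hEq.trans h (hEq.symm hx)))
    exact Rdown y x b (Or.inr ⟨hyx, sep a a' y x haa hne hy hx⟩) hrx
  -- finality in the second coordinate
  have fin1 : ∀ a b' b, aux1 E R a b' → leOf tri b' b → aux1 E R a b :=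
    fun a b' b h hb x hx => Rup x b' b (h x hx) hb
  have fin2 : ∀ a b' b, aux2 E R a b' → leOf tri b' b → aux2 E R a b := by
    rintro a b' b ⟨x, hx, hr⟩ hb
    exact ⟨x, hx, Rup x b' b hr hb⟩
  -- downward closure in the first coordinate
  have down1 : ∀ a a' b, leOf prec a a' → aux1 E R a' b → aux1 E R a b := by
    rintro a a' b (h | rfl) h1
    · by_cases he : E a a'
      · exact inv1 a a' b he h1
      · exact key1 a a' b h he ⟨a', hEq.refl a', h1sub a' b h1⟩
    · exact h1
  have down2 : ∀ a a' b, leOf prec a a' → aux2 E R a' b → aux2 E R a b := by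
    rintro a a' b (h | rfl) h2
    · by_cases he : E a a'
      · exact inv2 a a' b he h2
      · exact hsub2 a b (h1sub a b (key1 a a' b h he h2))
    · exact h2
  -- two gaps meeting force equivalent classes
  have classdet : ∀ c a' b, (aux2 E R c b ∧ ¬ aux1 E R c b) →
      (aux2 E R a' b ∧ ¬ aux1 E R a' b) → E c a' := by
    intro c a' b hc ha
    by_cases he : E c a'
    · exact he
    exfalso
    rcases trichotomous_of prec c a' with h | h | h
    · exact hc.2 (key1 c a' b h he ha.1)
    · exact he (h ▸ hEq.refl c)
    · exact ha.2 (key1 a' c b h (fun h' => he (hEq.symm h')) hc.1)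
  refine ⟨auxF E R, aux1 E R, aux2 E R, aux3 E R, ⟨⟨?_, ?_, ?_⟩, ?_⟩, ?_, ?_, ?_, ?_⟩
  · -- refl
    exact fun b => Or.inl rfl
  · -- symm
    rintro b b' (rfl | ⟨a, h1, h2⟩)
    · exact Or.inl rfl
    · exact Or.inr ⟨a, h2, h1⟩
  · -- trans
    rintro b c d (rfl | ⟨a1, hb, hc⟩) hcd
    · exact hcd
    rcases hcd with rfl | ⟨a2, hc', hd⟩
    · exact Or.inr ⟨a1, hb, hc⟩
    have he : E a1 a2 := classdet a1 a2 c hc hc'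
    exact Or.inr ⟨a1, hb, ⟨inv2 a1 a2 d he hd.1, fun h1 => hd.2 (inv1 a2 a1 d (hEq.symm he) h1)⟩⟩
  · -- convexity of F
    rintro b b' c (rfl | ⟨a, hb, hb'⟩) h1 h2
    · exact absurd (trans_of tri h1 h2) (irrefl_of tri b)
    · exact Or.inr ⟨a, hb, fin2 a b c hb.1 (Or.inl h1),
        fun hcon => hb'.2 (fin1 a c b' hcon (Or.inl h2))⟩
  · -- R₁ monotone
    intro a a' b b' ha h hb
    exact fin1 a b' b (down1 a a' b' ha h) hb
  · -- R₂ monotone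
    intro a a' b b' ha h hb
    exact fin2 a b' b (down2 a a' b' ha h) hb
  · -- R₃ monotone
    have down3 : ∀ a a' b, leOf prec a a' → aux3 E R a' b → aux3 E R a b := by
      rintro a a' b (h | rfl) h3
      · by_cases he : E a a'
        · rcases h3 with h1 | ⟨h2, hn⟩
          · exact Or.inl (inv1 a a' b he h1)
          · exact Or.inr ⟨inv2 a a' b he h2,
              fun hr => hn (Rdown a' a b (Or.inl ⟨hEq.symm he, h⟩) hr)⟩
        · have h2 : aux2 E R a' b := by
            rcases h3 with h1 | ⟨h2, _⟩
            · exact hsub2 a' b (h1sub a' b h1)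
            · exact h2
          exact Or.inl (key1 a a' b h he h2)
      · exact h3
    have fin3 : ∀ a' b' b, aux3 E R a' b' → leOf (ltE tri (auxF E R)) b' b → aux3 E R a' b := by
      rintro a' b' b h3 (hlt | rfl)
      · rcases hlt with ⟨hF, htb⟩ | ⟨hnF, htb⟩
        · -- F b' b, tri b b'
          rcases hF with rfl | ⟨c, hb', hbc⟩
          · exact h3
          rcases h3 with h1 | ⟨h2, hn⟩
          · by_cases he : E c a'
            · exact absurd (inv1 c a' b' he h1) hb'.2
            rcases trichotomous_of prec c a' with h | h | h
            · exact absurd (key1 c a' b' h he (hsub2 a' b' (h1sub a' b' h1))) hb'.2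
            · exact absurd (h ▸ hEq.refl c) he
            · exact Or.inl (key1 a' c b h (fun h' => he (hEq.symm h')) hbc.1)
          · have hIa' : aux2 E R a' b' ∧ ¬ aux1 E R a' b' := ⟨h2, fun h1 => hn (h1sub a' b' h1)⟩
            have he : E c a' := classdet c a' b' hb' hIa'
            refine Or.inr ⟨inv2 a' c b (hEq.symm he) hbc.1,
              fun hr => hn (Rup a' b b' hr (Or.inl htb))⟩
        · -- ¬F b' b, tri b' b
          rcases h3 with h1 | ⟨h2, hn⟩
          · exact Or.inl (fin1 a' b' b h1 (Or.inl htb))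
          · have hIa' : aux2 E R a' b' ∧ ¬ aux1 E R a' b' := ⟨h2, fun h1 => hn (h1sub a' b' h1)⟩
            have h2b : aux2 E R a' b := fin2 a' b' b h2 (Or.inl htb)
            by_cases h1b : aux1 E R a' b
            · exact Or.inl h1b
            · exact absurd (Or.inr ⟨a', hIa', h2b, h1b⟩) hnF
      · exact h3
    intro a a' b b' ha h hb
    exact down3 a a' b ha (fin3 a' b' b h hb)
  · -- the decomposition
    intro x y
    constructor
    · intro h
      by_cases h1 : aux1 E R x y
      · exact Or.inl h1
      · refine Or.inr ⟨hsub2 x y h, fun h3 => ?_⟩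
        rcases h3 with h1' | ⟨_, hn⟩
        · exact h1 h1'
        · exact hn h
    · rintro (h1 | ⟨h2, h3⟩)
      · exact h1sub x y h1
      · by_contra hn
        exact h3 (Or.inr ⟨h2, hn⟩)
end
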